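/- If D is an arc-locally in-semicomplete digraph, then every induced odd cycle of length at least five in the underlying graph U(D) is induced in D by a directed odd cycle of D; that is, every set of vertices of odd size at least five inducing a cycle in U(D) induces a directed cycle in D. -/
import Mathlib


variable {V : Type*}

/-- `u` and `v` are adjacent in the digraph with arc relation `A`. -/
def DAdj (A : V → V → Prop) (u v : V) : Prop := A u v ∨ A v u

/-- `A` is arc-locally in-semicomplete: for any four distinct vertices
`v1,v2,v3,v4` with `v1→v2`, `v2→v3`, `v4→v3`, the vertices `v1,v4` are adjacent. -/
def ArcLocallyIn (A : V → V → Prop) : Prop :=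
  ∀ v1 v2 v3 v4 : V, v1 ≠ v2 → v1 ≠ v3 → v1 ≠ v4 → v2 ≠ v3 → v2 ≠ v4 → v3 ≠ v4 →
    A v1 v2 → A v2 v3 → A v4 v3 → DAdj A v1 v4

/-- `A` is arc-locally out-semicomplete: for any four distinct vertices
`v1,v2,v3,v4` with `v2→v1`, `v2→v3`, `v3→v4`, the vertices `v1,v4` are adjacent. -/
def ArcLocallyOut (A : V → V → Prop) : Prop :=
  ∀ v1 v2 v3 v4 : V, v1 ≠ v2 → v1 ≠ v3 → v1 ≠ v4 → v2 ≠ v3 → v2 ≠ v4 → v3 ≠ v4 →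
    A v2 v1 → A v2 v3 → A v3 v4 → DAdj A v1 v4

/-- The underlying simple graph of the digraph `A`. -/
def Underlying (A : V → V → Prop) : SimpleGraph V := SimpleGraph.fromRel A

/-- A simple graph is perfect if every induced subgraph has chromatic number
equal to its clique number. -/
def GraphPerfect (G : SimpleGraph V) : Prop :=
  ∀ S : Set V, (G.induce S).chromaticNumber = ((G.induce S).cliqueNum : ℕ∞)

/-- A digraph is diperfect if its underlying graph is perfect. -/
def Diperfect (A : V → V → Prop) : Prop := GraphPerfect (Underlying A)

/-- The pairs of consecutive arcs `x ∈ S, y ∈ S, x→y` restricted to `S`. -/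
def ArcOn (A : V → V → Prop) (S : Set V) (x y : V) : Prop := x ∈ S ∧ y ∈ S ∧ A x y

/-- The induced subdigraph on `S` is strong. -/
def StrongOn (A : V → V → Prop) (S : Set V) : Prop :=
  ∀ u ∈ S, ∀ v ∈ S, Relation.ReflTransGen (ArcOn A S) u v

/-- `S` is (the vertex set of) a strong component: a maximal set inducing a
strong subdigraph. -/
def IsStrongComponent (A : V → V → Prop) (S : Set V) : Prop :=
  S.Nonempty ∧ StrongOn A S ∧ ∀ T : Set V, S ⊆ T → StrongOn A T → T ⊆ S

/-- The strong component `S` is initial: no outside vertex dominates a vertex of `S`. -/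
def IsInitial (A : V → V → Prop) (S : Set V) : Prop :=
  ∀ v, v ∉ S → ∀ u ∈ S, ¬ A v u

/-- The digraph is strong. -/
def IsStrong (A : V → V → Prop) : Prop := ∀ u v : V, Relation.ReflTransGen A u v

/-- There is a directed path from `u` to `v`. -/
def Reach (A : V → V → Prop) (u v : V) : Prop := Relation.ReflTransGen A u v

/-- The induced subdigraph on `S` is semicomplete. -/
def SemicompleteOn (A : V → V → Prop) (S : Set V) : Prop :=
  ∀ u ∈ S, ∀ v ∈ S, u ≠ v → DAdj A u v

/-- The induced subdigraph on `S` is bipartite (its underlying graph is 2-colorable). -/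
def BipartiteOn (A : V → V → Prop) (S : Set V) : Prop :=
  ∃ T : Set V, ∀ u ∈ S, ∀ v ∈ S, DAdj A u v →
    ((u ∈ T ∧ v ∉ T) ∨ (u ∉ T ∧ v ∈ T))

/-- The induced subdigraph on `S` is connected (in the underlying graph). -/
def ConnOn (A : V → V → Prop) (S : Set V) : Prop :=
  ∀ u ∈ S, ∀ v ∈ S,
    Relation.ReflTransGen (fun x y => x ∈ S ∧ y ∈ S ∧ DAdj A x y) u v

/-- The digraph is connected. -/
def IsConnected' (A : V → V → Prop) : Prop := ConnOn A Set.univ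

/-- `D` has a clique cut: a set `B` inducing a semicomplete subdigraph whose
removal disconnects the digraph. -/
def HasCliqueCut (A : V → V → Prop) : Prop :=
  ∃ B : Set V, SemicompleteOn A B ∧ ¬ ConnOn A Bᶜ

/-- The induced subdigraph on `S` is an extended cycle of length `k`:
`S` is partitioned into `k` nonempty (necessarily stable) sets `X 0, …, X (k-1)`
and the arcs between vertices of `S` are exactly those from `X i` to `X (i+1)`
(indices modulo `k`). -/
def IsExtendedCycleOn (A : V → V → Prop) (S : Set V) (k : ℕ) : Prop :=
  2 ≤ k ∧ ∃ X : ZMod k → Set V,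
    (∀ i, (X i).Nonempty) ∧
    (∀ i j, i ≠ j → Disjoint (X i) (X j)) ∧
    (⋃ i, X i) = S ∧
    (∀ u ∈ S, ∀ v ∈ S, (A u v ↔ ∃ i, u ∈ X i ∧ v ∈ X (i + 1)))

/-- The induced subdigraph on `S` is an odd extended cycle of length at least five. -/
def IsOddExtCycle5On (A : V → V → Prop) (S : Set V) : Prop :=
  ∃ k : ℕ, Odd k ∧ 5 ≤ k ∧ IsExtendedCycleOn A S k

set_option maxHeartbeats 1000000 in
private theorem stmt_1_aux {V : Type*} (A : V → V → Prop)
    (hD : ∀ v1 v2 v3 v4 : V, v1 ≠ v2 → v1 ≠ v3 → v1 ≠ v4 → v2 ≠ v3 → v2 ≠ v4 → v3 ≠ v4 →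
    A v1 v2 → A v2 v3 → A v4 v3 → (A v1 v4 ∨ A v4 v1)) :
    ∀ (n : ℕ) (c : ZMod n → V), Odd n → 5 ≤ n → Function.Injective c →
      (∀ i j : ZMod n, i ≠ j →
        ((A (c i) (c j) ∨ A (c j) (c i)) ↔ (j = i + 1 ∨ i = j + 1))) →
      ((∀ i : ZMod n, A (c i) (c (i + 1)) ∧ ¬ A (c (i + 1)) (c i)) ∨
       (∀ i : ZMod n, A (c (i + 1)) (c i) ∧ ¬ A (c i) (c (i + 1)))) := by
  intro n c hodd hn hinj hind
  haveI : NeZero n := ⟨by omega⟩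
  -- numeral facts
  have hcast : ∀ k : ℕ, 0 < k → k < n → ((k : ZMod n) ≠ 0) := by
    intro k hk hkn h
    rw [ZMod.natCast_eq_zero_iff] at h
    exact absurd (Nat.le_of_dvd hk h) (by omega)
  have c1 : (1 : ZMod n) ≠ 0 := by simpa using hcast 1 (by omega) (by omega)
  have c2 : (2 : ZMod n) ≠ 0 := by simpa using hcast 2 (by omega) (by omega)
  have c3 : (3 : ZMod n) ≠ 0 := by simpa using hcast 3 (by omega) (by omega)
  have c4 : (4 : ZMod n) ≠ 0 := by simpa using hcast 4 (by omega) (by omega)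
  have hne1 : ∀ i : ZMod n, i ≠ i + 1 := fun i h => c1 (by linear_combination -h)
  have hne2 : ∀ i : ZMod n, i ≠ i + 2 := fun i h => c2 (by linear_combination -h)
  have hne3 : ∀ i : ZMod n, i ≠ i + 3 := fun i h => c3 (by linear_combination -h)
  -- every cycle edge has an arc
  have hadj : ∀ i : ZMod n, A (c i) (c (i + 1)) ∨ A (c (i + 1)) (c i) := by
    intro i
    exact (hind i (i + 1) (hne1 i)).mpr (Or.inl rfl)
  -- no chord between i and i+3
  have key : ∀ i : ZMod n, ¬ (A (c i) (c (i + 3)) ∨ A (c (i + 3)) (c i)) := by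
    intro i hd
    rcases (hind i (i + 3) (hne3 i)).mp hd with h | h
    · exact c2 (by linear_combination h)
    · exact c4 (by linear_combination -h)
  -- rule 1 : forbidden pattern  i → i+1 → i+2 ← i+3
  have rule1 : ∀ i : ZMod n, A (c i) (c (i + 1)) → A (c (i + 1)) (c (i + 2)) →
      ¬ A (c (i + 3)) (c (i + 2)) := by
    intro i h01 h12 h32
    refine key i (hD (c i) (c (i + 1)) (c (i + 2)) (c (i + 3))
      (hinj.ne (hne1 i)) (hinj.ne (hne2 i)) (hinj.ne (hne3 i))
      (hinj.ne ?_) (hinj.ne ?_) (hinj.ne ?_) h01 h12 h32)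
    · intro h; exact c1 (by linear_combination -h)
    · intro h; exact c2 (by linear_combination -h)
    · intro h; exact c1 (by linear_combination -h)
  -- rule 2 : forbidden pattern  i → i+1 ← i+2 ← i+3
  have rule2 : ∀ i : ZMod n, A (c (i + 2)) (c (i + 1)) → A (c (i + 3)) (c (i + 2)) →
      ¬ A (c i) (c (i + 1)) := by
    intro i h21 h32 h01
    refine key i ((hD (c (i + 3)) (c (i + 2)) (c (i + 1)) (c i)
      (hinj.ne ?_) (hinj.ne ?_) (hinj.ne ?_) (hinj.ne ?_) (hinj.ne ?_)
      (hinj.ne (hne1 i).symm) h32 h21 h01).symm.imp id id)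
    · intro h; exact c1 (by linear_combination h)
    · intro h; exact c2 (by linear_combination h)
    · intro h; exact c3 (by linear_combination h)
    · intro h; exact c1 (by linear_combination h)
    · intro h; exact c2 (by linear_combination h)
  have reach : ∀ i j : ZMod n, ∃ k : ℕ, j = i + (k : ZMod n) := by
    intro i j
    obtain ⟨k, hk⟩ := (ZMod.natCast_rightInverse (n := n)).surjective (j - i)
    exact ⟨k, by linear_combination -hk⟩
  -- forward propagation
  have propf : (∃ i : ZMod n, A (c i) (c (i + 1)) ∧ A (c (i + 1)) (c (i + 2))) →
      ∀ j : ZMod n, A (c j) (c (j + 1)) ∧ ¬ A (c (j + 1)) (c j) := by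
    rintro ⟨i, hf0, hf1⟩
    have step : ∀ k : ℕ,
        A (c (i + (k:ZMod n))) (c (i + (k:ZMod n) + 1)) ∧
        A (c (i + (k:ZMod n) + 1)) (c (i + (k:ZMod n) + 2)) := by
      intro k
      induction k with
      | zero =>
        rw [show i + ((0:ℕ):ZMod n) = i from by push_cast; ring]
        exact ⟨hf0, hf1⟩
      | succ m ih =>
        obtain ⟨ha, hb⟩ := ih
        rw [show i + ((m+1:ℕ):ZMod n) = i + (m:ZMod n) + 1 from by push_cast; ring,
          show i + (m:ZMod n) + 1 + 1 = i + (m:ZMod n) + 2 from by ring,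
          show i + (m:ZMod n) + 1 + 2 = i + (m:ZMod n) + 3 from by ring]
        refine ⟨hb, ?_⟩
        rcases hadj (i + (m:ZMod n) + 2) with h | h
        · rwa [show i + (m:ZMod n) + 2 + 1 = i + (m:ZMod n) + 3 from by ring] at h
        · rw [show i + (m:ZMod n) + 2 + 1 = i + (m:ZMod n) + 3 from by ring] at h
          exact absurd h (rule1 (i + (m:ZMod n)) ha hb)
    have allf : ∀ j : ZMod n, A (c j) (c (j + 1)) := by
      intro j
      obtain ⟨k, hk⟩ := reach i j
      have := (step k).1
      rwa [← hk] at this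
    intro j
    refine ⟨allf j, ?_⟩
    have h1 := allf (j - 2)
    have h2 := allf (j - 1)
    rw [show j - 2 + 1 = j - 1 from by ring] at h1
    rw [show j - 1 + 1 = j from by ring] at h2
    have hr := rule1 (j - 2)
    rw [show j - 2 + 1 = j - 1 from by ring, show j - 2 + 2 = j from by ring,
      show j - 2 + 3 = j + 1 from by ring] at hr
    exact hr h1 h2
  -- backward propagation
  have propb : (∃ i : ZMod n, A (c (i + 2)) (c (i + 1)) ∧ A (c (i + 3)) (c (i + 2))) →
      ∀ j : ZMod n, A (c (j + 1)) (c j) ∧ ¬ A (c j) (c (j + 1)) := by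
    rintro ⟨i, hb0, hb1⟩
    have step : ∀ k : ℕ,
        A (c (i - (k:ZMod n) + 2)) (c (i - (k:ZMod n) + 1)) ∧
        A (c (i - (k:ZMod n) + 3)) (c (i - (k:ZMod n) + 2)) := by
      intro k
      induction k with
      | zero =>
        rw [show i - ((0:ℕ):ZMod n) = i from by push_cast; ring]
        exact ⟨hb0, hb1⟩
      | succ m ih =>
        obtain ⟨ha, hb⟩ := ih
        rw [show i - ((m+1:ℕ):ZMod n) + 1 = i - (m:ZMod n) from by push_cast; ring,
          show i - ((m+1:ℕ):ZMod n) + 2 = i - (m:ZMod n) + 1 from by push_cast; ring,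
          show i - ((m+1:ℕ):ZMod n) + 3 = i - (m:ZMod n) + 2 from by push_cast; ring]
        refine ⟨?_, ha⟩
        have hr := rule2 (i - (m:ZMod n)) ha hb
        rcases hadj (i - (m:ZMod n)) with h | h
        · exact absurd h hr
        · exact h
    have allb : ∀ j : ZMod n, A (c (j + 1)) (c j) := by
      intro j
      obtain ⟨k, hk⟩ := reach j (i + 1)
      have := (step k).1
      rwa [show i - (k:ZMod n) + 2 = j + 1 from by linear_combination hk,
        show i - (k:ZMod n) + 1 = j from by linear_combination hk] at this
    intro j
    refine ⟨allb j, ?_⟩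
    have h1 := allb (j + 1)
    have h2 := allb (j + 2)
    rw [show j + 1 + 1 = j + 2 from by ring] at h1
    rw [show j + 2 + 1 = j + 3 from by ring] at h2
    exact rule2 j h1 h2
  by_cases hf : ∃ i : ZMod n, A (c i) (c (i + 1)) ∧ A (c (i + 1)) (c (i + 2))
  · exact Or.inl (propf hf)
  by_cases hb : ∃ i : ZMod n, A (c (i + 2)) (c (i + 1)) ∧ A (c (i + 3)) (c (i + 2))
  · exact Or.inr (propb hb)
  exfalso
  push_neg at hf hb
  -- strict alternation
  have halt : ∀ i : ZMod n, A (c i) (c (i + 1)) ↔ ¬ A (c (i + 1)) (c (i + 2)) := by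
    intro i
    constructor
    · exact hf i
    · intro hnF1
      by_contra hnF
      have hB : A (c (i + 1)) (c i) := (hadj i).resolve_left hnF
      have hB1 : A (c (i + 2)) (c (i + 1)) := by
        have := (hadj (i + 1)).resolve_left (by
          rwa [show i + 1 + 1 = i + 2 from by ring])
        rwa [show i + 1 + 1 = i + 2 from by ring] at this
      have := hb (i - 1)
      rw [show i - 1 + 2 = i + 1 from by ring, show i - 1 + 1 = i from by ring,
        show i - 1 + 3 = i + 2 from by ring] at this
      exact this hB hB1
  have htwo : ∀ i : ZMod n, A (c (i + 2)) (c (i + 2 + 1)) ↔ A (c i) (c (i + 1)) := by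
    intro i
    have a := halt i
    have b := halt (i + 1)
    rw [show i + 1 + 1 = i + 2 from by ring, show i + 1 + 2 = i + 3 from by ring] at b
    rw [show i + 2 + 1 = i + 3 from by ring]
    tauto
  have hiter : ∀ (k : ℕ) (i : ZMod n),
      A (c (i + ((2 * k : ℕ) : ZMod n))) (c (i + ((2 * k : ℕ) : ZMod n) + 1)) ↔
      A (c i) (c (i + 1)) := by
    intro k
    induction k with
    | zero => intro i; rw [show i + ((2*0:ℕ):ZMod n) = i from by push_cast; ring]
    | succ m ih =>
      intro i
      have e : i + ((2*(m+1):ℕ):ZMod n) = (i + 2) + ((2*m:ℕ):ZMod n) := by push_cast; ring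
      rw [e, ih (i + 2)]
      exact htwo i
  obtain ⟨m, hm⟩ := hodd
  have en' : ((2 * m : ℕ) : ZMod n) + 1 = 0 := by
    have en : ((2 * m + 1 : ℕ) : ZMod n) = 0 := by rw [← hm]; exact ZMod.natCast_self n
    push_cast at en ⊢
    linear_combination en
  have h1 := hiter m 0
  have h2 := halt ((0 : ZMod n) + ((2 * m : ℕ) : ZMod n))
  have e0 : (0 : ZMod n) + ((2 * m : ℕ) : ZMod n) + 1 = 0 := by linear_combination en'
  have e1 : (0 : ZMod n) + ((2 * m : ℕ) : ZMod n) + 2 = 0 + 1 := by linear_combination en'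
  rw [e0] at h1
  rw [e0, e1] at h2
  tauto


/-- In an arc-locally in-semicomplete digraph, every induced
odd cycle of length at least five in the underlying graph is induced in `D` by
a directed odd cycle: the arcs on it go consistently in one direction around
the cycle (and only in that direction). -/
theorem stmt_1 {V : Type*} [Fintype V] (A : V → V → Prop) (hirr : Irreflexive A)
    (hD : ArcLocallyIn A) :
    ∀ (n : ℕ) (c : ZMod n → V), Odd n → 5 ≤ n → Function.Injective c →
      (∀ i j : ZMod n, i ≠ j →
        (DAdj A (c i) (c j) ↔ (j = i + 1 ∨ i = j + 1))) →
      ((∀ i : ZMod n, A (c i) (c (i + 1)) ∧ ¬ A (c (i + 1)) (c i)) ∨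
       (∀ i : ZMod n, A (c (i + 1)) (c i) ∧ ¬ A (c i) (c (i + 1)))) := by
  exact stmt_1_aux A hD
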